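/- Let λ > 0 and min F < D < 0 with F as above. Then the equation F(x) = D has exactly four real solutions; if ξ > 0 denotes the largest one, the four solutions are −ξ < −(2λ/(p-1) − ξ^{p/(p-1)})^{(p-1)/p} < (2λ/(p-1) − ξ^{p/(p-1)})^{(p-1)/p} < ξ. -/

import Mathlib

open Real MeasureTheory Set intervalIntegral Filter

noncomputable section

/-- Incomplete p-elliptic integral of the first kind, type 1. -/
def F1 (p q x : ℝ) : ℝ :=
  ∫ θ in (0:ℝ)..x, |Real.cos θ| ^ (1 - 2/p) / Real.sqrt (1 - q^2 * Real.sin θ ^ 2)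

/-- Complete p-elliptic integral of the first kind, type 1. -/
def K1 (p q : ℝ) : ℝ := F1 p q (π/2)

/-- Incomplete p-elliptic integral of the second kind, type 1. -/
def E1 (p q x : ℝ) : ℝ :=
  ∫ θ in (0:ℝ)..x, Real.sqrt (1 - q^2 * Real.sin θ ^ 2) * |Real.cos θ| ^ (1 - 2/p)

/-- Complete p-elliptic integral of the second kind, type 1. -/
def E1c (p q : ℝ) : ℝ := E1 p q (π/2)

/-- Incomplete p-elliptic integral of the first kind, type 2. -/
def F2 (p q x : ℝ) : ℝ :=
  ∫ θ in (0:ℝ)..x, (1 - q^2 * Real.sin θ ^ 2) ^ (-(1/p))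

/-- Complete p-elliptic integral of the first kind, type 2. -/
def K2 (p q : ℝ) : ℝ := F2 p q (π/2)

open Classical in
/-- Domain of the amplitude parametrization: restricted to `(-π/2, π/2)` when `q = 1` and `p ≤ 2`. -/
def amDom (p q : ℝ) : Set ℝ := if q = 1 ∧ p ≤ 2 then Ioo (-(π/2)) (π/2) else univ

/-- `g` is the inverse of `f`, with `f` regarded as a bijection from `S` onto `ℝ`. -/
def IsInverseOn (f g : ℝ → ℝ) (S : Set ℝ) : Prop :=
  (∀ y ∈ S, g (f y) = y) ∧ ∀ x : ℝ, g x ∈ S ∧ f (g x) = x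

/-- For `λ > 0` and `min F < D < 0`, the equation `F(x) = D` has exactly four solutions
`-ξ < -η < η < ξ` with `η = (2λ/(p-1) - ξ^{p/(p-1)})^{(p-1)/p}` and `ξ` the largest one. -/
theorem four_solutions (p lam D : ℝ) (hp : 1 < p) (hlam : 0 < lam) (hD : D < 0)
    (hmin : ∃ x : ℝ, (p-1)^2 * |x| ^ (2*p/(p-1)) - 2*lam*(p-1) * |x| ^ (p/(p-1)) < D) :
    ∃ ξ : ℝ, 0 < ξ ∧
      ((p-1)^2 * |ξ| ^ (2*p/(p-1)) - 2*lam*(p-1) * |ξ| ^ (p/(p-1)) = D) ∧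
      (∀ x : ℝ, (p-1)^2 * |x| ^ (2*p/(p-1)) - 2*lam*(p-1) * |x| ^ (p/(p-1)) = D → x ≤ ξ) ∧
      {x : ℝ | (p-1)^2 * |x| ^ (2*p/(p-1)) - 2*lam*(p-1) * |x| ^ (p/(p-1)) = D}
        = {-ξ, -((2*lam/(p-1) - ξ ^ (p/(p-1))) ^ ((p-1)/p)),
            (2*lam/(p-1) - ξ ^ (p/(p-1))) ^ ((p-1)/p), ξ} ∧
      -ξ < -((2*lam/(p-1) - ξ ^ (p/(p-1))) ^ ((p-1)/p)) ∧
      (0:ℝ) < (2*lam/(p-1) - ξ ^ (p/(p-1))) ^ ((p-1)/p) ∧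
      (2*lam/(p-1) - ξ ^ (p/(p-1))) ^ ((p-1)/p) < ξ := by
  have hp1 : (0:ℝ) < p - 1 := by linarith
  have hp0 : (0:ℝ) < p := by linarith
  set α := p/(p-1) with hα_def
  set β := (p-1)/p with hβ_def
  have hαpos : 0 < α := by positivity
  have hβpos : 0 < β := by positivity
  have hαβ : α * β = 1 := by rw [hα_def, hβ_def, div_mul_div_comm, mul_comm p, div_self (mul_pos hp1 hp0).ne']
  have hβα : β * α = 1 := by rw [mul_comm]; exact hαβ
  -- rewrite the double-exponent term as a square
  have key : ∀ x : ℝ, (p-1)^2 * |x| ^ (2*p/(p-1)) - 2*lam*(p-1) * |x| ^ α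
      = (p-1)^2 * (|x|^α)^2 - 2*lam*(p-1) * (|x|^α) := by
    intro x
    have h2 : |x| ^ (2*p/(p-1)) = (|x|^α)^(2:ℕ) := by
      rw [← Real.rpow_natCast (|x|^α) 2, ← Real.rpow_mul (abs_nonneg x)]
      congr 1
      rw [hα_def]; push_cast; ring
    rw [h2]
  -- D is above the minimum -lam^2
  have hDlb : -lam^2 < D := by
    obtain ⟨x, hx⟩ := hmin
    rw [key x] at hx
    nlinarith [sq_nonneg ((p-1) * (|x|^α) - lam)]
  set s := Real.sqrt (lam^2 + D) with hs_def
  have hs2 : s^2 = lam^2 + D := Real.sq_sqrt (by linarith)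
  have hs_pos : 0 < s := Real.sqrt_pos.mpr (by linarith)
  have hs_lt : s < lam := by nlinarith
  set tp := (lam + s)/(p-1) with htp_def
  set tm := (lam - s)/(p-1) with htm_def
  have htmpos : 0 < tm := div_pos (by linarith) hp1
  have htppos : 0 < tp := div_pos (by linarith) hp1
  have htlt : tm < tp := by
    rw [htm_def, htp_def, div_lt_div_iff₀ hp1 hp1]; nlinarith
  set ξ := tp ^ β with hξ_def
  set η := tm ^ β with hη_def
  have hξpos : 0 < ξ := Real.rpow_pos_of_pos htppos β
  have hηpos : 0 < η := Real.rpow_pos_of_pos htmpos β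
  have hξα : ξ ^ α = tp := by
    rw [hξ_def, ← Real.rpow_mul htppos.le, hβα, Real.rpow_one]
  have hηα : η ^ α = tm := by
    rw [hη_def, ← Real.rpow_mul htmpos.le, hβα, Real.rpow_one]
  have hηξ : η < ξ := Real.rpow_lt_rpow htmpos.le htlt hβpos
  -- characterize solutions
  have sol_iff : ∀ x : ℝ,
      ((p-1)^2 * |x| ^ (2*p/(p-1)) - 2*lam*(p-1) * |x| ^ α = D)
        ↔ (x = -ξ ∨ x = -η ∨ x = η ∨ x = ξ) := by
    intro x
    rw [key x]
    constructor
    · intro h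
      have hfac : ((p-1) * (|x|^α) - lam - s) * ((p-1) * (|x|^α) - lam + s) = 0 := by
        nlinarith
      have habs : |x|^α = tp ∨ |x|^α = tm := by
        rcases mul_eq_zero.mp hfac with h1 | h1
        · left; rw [htp_def]; field_simp; linarith
        · right; rw [htm_def]; field_simp; linarith
      have hxabs : |x| = ξ ∨ |x| = η := by
        rcases habs with h1 | h1
        · left
          have := congrArg (fun y => y ^ β) h1
          simpa [← Real.rpow_mul (abs_nonneg x), hαβ] using this
        · right
          have := congrArg (fun y => y ^ β) h1
          simpa [← Real.rpow_mul (abs_nonneg x), hαβ] using this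
      rcases hxabs with h1 | h1
      · rcases abs_eq hξpos.le |>.mp h1 with h2 | h2
        · exact Or.inr (Or.inr (Or.inr h2))
        · exact Or.inl h2
      · rcases abs_eq hηpos.le |>.mp h1 with h2 | h2
        · exact Or.inr (Or.inr (Or.inl h2))
        · exact Or.inr (Or.inl h2)
    · intro h
      have hvξ : (p-1)^2 * tp^2 - 2*lam*(p-1) * tp = D := by
        have h1 : (p-1)^2 * tp^2 - 2*lam*(p-1) * tp = s^2 - lam^2 := by
          rw [htp_def]; field_simp; ring
        linarith [hs2, h1]
      have hvη : (p-1)^2 * tm^2 - 2*lam*(p-1) * tm = D := by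
        have h1 : (p-1)^2 * tm^2 - 2*lam*(p-1) * tm = s^2 - lam^2 := by
          rw [htm_def]; field_simp; ring
        linarith [hs2, h1]
      rcases h with h1 | h1 | h1 | h1 <;> subst h1
      · rw [abs_neg, abs_of_pos hξpos, hξα]; exact hvξ
      · rw [abs_neg, abs_of_pos hηpos, hηα]; exact hvη
      · rw [abs_of_pos hηpos, hηα]; exact hvη
      · rw [abs_of_pos hξpos, hξα]; exact hvξ
  have hηexpr : 2*lam/(p-1) - ξ ^ α = tm := by
    rw [hξα, htp_def, htm_def]; ring
  refine ⟨ξ, hξpos, (sol_iff ξ).mpr (Or.inr (Or.inr (Or.inr rfl))), ?_, ?_, ?_, ?_, ?_⟩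
  · intro x hx
    rcases (sol_iff x).mp hx with h1 | h1 | h1 | h1 <;> subst h1 <;> linarith
  · ext x
    simp only [mem_setOf_eq, mem_insert_iff, mem_singleton_iff, hηexpr]
    exact sol_iff x
  · rw [hηexpr]; exact neg_lt_neg hηξ
  · rw [hηexpr]; exact hηpos
  · rw [hηexpr]; exact hηξ
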